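/- Let G be a finite simple graph that is the disjoint union of t vertex-disjoint cycles C_{n_1} + C_{n_2} + ⋯ + C_{n_t} (each n_i ≥ 3), and let S be a multiset of positive integers with |S| = |V(G)|. If G is S-fair, then the number of distinct values occurring in S is at most 4t. -/

import Mathlib

open scoped Classical

/-- Sum of labels over the open neighborhood of `v`. -/
noncomputable def nbrSum {V : Type*} [Fintype V] (G : SimpleGraph V) (f : V → ℕ) (v : V) : ℕ :=
  ∑ u : V, if G.Adj v u then f u else 0

/-- `f` is a bijective labeling of `G` by the multiset `S` witnessing fairness constant `k`. -/
def IsFairLabeling {V : Type*} [Fintype V] (G : SimpleGraph V) (S : Multiset ℕ)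
    (f : V → ℕ) (k : ℕ) : Prop :=
  Finset.univ.val.map f = S ∧ ∀ v : V, nbrSum G f v = k

/-- `G` is `S`-fair. -/
def IsFair {V : Type*} [Fintype V] (G : SimpleGraph V) (S : Multiset ℕ) : Prop :=
  ∃ (f : V → ℕ) (k : ℕ), IsFairLabeling G S f k

/-- The disjoint union of `t` cycles `C_{n 0} + ⋯ + C_{n (t-1)}`: within the `i`-th
component, vertex `j` is adjacent to vertex `j + 1 (mod n i)`. -/
def cyclesUnion (t : ℕ) (n : Fin t → ℕ) : SimpleGraph (Σ i : Fin t, Fin (n i)) :=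
  SimpleGraph.fromRel (fun x y =>
    x.1 = y.1 ∧ ((x.2 : ℕ) + 1) % n x.1 = (y.2 : ℕ))

open Fin.CommRing Fin.NatCast

lemma cu_adj_fst {t : ℕ} {n : Fin t → ℕ} {x y : Σ i : Fin t, Fin (n i)}
    (h : (cyclesUnion t n).Adj x y) : x.1 = y.1 := by
  rw [cyclesUnion, SimpleGraph.fromRel_adj] at h
  rcases h with ⟨-, h | h⟩
  · exact h.1
  · exact h.1.symm

lemma cu_adj_iff {t : ℕ} {n : Fin t → ℕ} (i : Fin t) [NeZero (n i)] (hn : 3 ≤ n i)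
    (a b : Fin (n i)) :
    (cyclesUnion t n).Adj ⟨i,a⟩ ⟨i,b⟩ ↔ (b = a + 1 ∨ b = a - 1) := by
  rw [cyclesUnion, SimpleGraph.fromRel_adj]
  have hone : ((1 : Fin (n i)) : ℕ) = 1 := by
    rw [Fin.val_one']; exact Nat.mod_eq_of_lt (by omega)
  have hstep : ∀ x y : Fin (n i), ((x:ℕ)+1) % n i = (y:ℕ) ↔ x + 1 = y := by
    intro x y
    rw [Fin.ext_iff, Fin.val_add, hone]
  have h1 : ∀ x : Fin (n i), x + 1 ≠ x := by
    intro x h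
    have hv := congrArg Fin.val h
    rw [Fin.val_add, hone] at hv
    have hx := x.isLt
    rcases Nat.lt_or_ge ((x:ℕ)+1) (n i) with hlt | hge
    · rw [Nat.mod_eq_of_lt hlt] at hv; omega
    · have he : (x:ℕ) + 1 = n i := by omega
      rw [he, Nat.mod_self] at hv; omega
  constructor
  · rintro ⟨hne, ⟨-, h⟩ | ⟨-, h⟩⟩
    · left; exact ((hstep a b).1 h).symm
    · right
      have h2 := (hstep b a).1 h
      rw [← h2]; ring
  · rintro (rfl | rfl)
    · refine ⟨fun h => h1 a ?_, Or.inl ⟨rfl, (hstep a (a+1)).2 rfl⟩⟩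
      exact (eq_of_heq (Sigma.mk.inj_iff.1 h).2).symm
    · refine ⟨fun h => h1 a ?_, Or.inr ⟨rfl, (hstep (a-1) a).2 (by ring)⟩⟩
      have h2 : a = a - 1 := eq_of_heq (Sigma.mk.inj_iff.1 h).2
      have h3 := congrArg (· + 1) h2
      have h4 : (a - 1) + 1 = a := by ring
      exact h3.trans h4

lemma cu_rel {t : ℕ} {n : Fin t → ℕ} (f : (Σ i : Fin t, Fin (n i)) → ℕ) (k : ℕ)
    (hk : ∀ v, nbrSum (cyclesUnion t n) f v = k) (i : Fin t) [NeZero (n i)]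
    (hn : 3 ≤ n i) (a : Fin (n i)) :
    f ⟨i, a⟩ + f ⟨i, a + 2⟩ = k := by
  have hone : ((1 : Fin (n i)) : ℕ) = 1 := by
    rw [Fin.val_one']; exact Nat.mod_eq_of_lt (by omega)
  have h2v : ((2 : Fin (n i)) : ℕ) = 2 := by
    have e : (2 : Fin (n i)) = 1 + 1 := by norm_num
    rw [e, Fin.val_add, hone]
    exact Nat.mod_eq_of_lt (by omega)
  have hne : a + 2 ≠ a := by
    intro h
    have h' : a + 2 = a + 0 := by rw [h, add_zero]
    have := add_left_cancel h'
    have hv := congrArg Fin.val this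
    rw [h2v] at hv
    simp at hv
  have key := hk ⟨i, a + 1⟩
  rw [nbrSum, ← Finset.univ_sigma_univ, Finset.sum_sigma] at key
  rw [Finset.sum_eq_single_of_mem i (Finset.mem_univ i)
    (fun i' _ hi' => Finset.sum_eq_zero (fun b _ => by
      rw [if_neg]; intro hadj; exact hi' (cu_adj_fst hadj).symm))] at key
  have hcond : ∀ b : Fin (n i),
      (cyclesUnion t n).Adj ⟨i, a + 1⟩ ⟨i, b⟩ ↔ b ∈ ({a + 2, a} : Finset (Fin (n i))) := by
    intro b
    rw [cu_adj_iff i hn]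
    have e1 : a + 1 + 1 = a + 2 := by ring
    have e2 : a + 1 - 1 = a := by ring
    rw [e1, e2]
    simp [Finset.mem_insert]
  rw [Finset.sum_congr rfl (fun b _ => if_congr (hcond b) rfl rfl)] at key
  rw [Finset.sum_ite_mem, Finset.univ_inter, Finset.sum_pair hne] at key
  rw [← key]; ring

lemma cu_vals {t : ℕ} {n : Fin t → ℕ} (f : (Σ i : Fin t, Fin (n i)) → ℕ) (k : ℕ)
    (hk : ∀ v, nbrSum (cyclesUnion t n) f v = k) (i : Fin t) [NeZero (n i)]
    (hn : 3 ≤ n i) (a : Fin (n i)) :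
    f ⟨i, a⟩ ∈ ({f ⟨i,0⟩, f ⟨i,1⟩, k - f ⟨i,0⟩, k - f ⟨i,1⟩} : Finset ℕ) := by
  have hrel := cu_rel f k hk i hn
  have hle : ∀ b : Fin (n i), f ⟨i, b⟩ ≤ k := fun b => le_trans (Nat.le_add_right _ _) (le_of_eq (hrel b))
  have hsub : ∀ b : Fin (n i), f ⟨i, b + 2⟩ = k - f ⟨i, b⟩ := by
    intro b; have := hrel b; omega
  have hmain : ∀ m : ℕ, f ⟨i, (m : Fin (n i))⟩ ∈
      ({f ⟨i,0⟩, f ⟨i,1⟩, k - f ⟨i,0⟩, k - f ⟨i,1⟩} : Finset ℕ) := by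
    intro m
    induction m using Nat.strong_induction_on with
    | _ m ih =>
      match m with
      | 0 => simp
      | 1 =>
        have : ((1 : ℕ) : Fin (n i)) = 1 := by push_cast; rfl
        rw [this]; simp
      | (l+2) =>
        have hc : ((l + 2 : ℕ) : Fin (n i)) = (l : Fin (n i)) + 2 := by push_cast; rfl
        rw [hc, hsub]
        have hl := ih l (by omega)
        simp only [Finset.mem_insert, Finset.mem_singleton] at hl ⊢
        rcases hl with h | h | h | h <;> rw [h]
        · tauto
        · tauto
        · have := hle 0; left; omega
        · have := hle 1; right; left; omega
  have := hmain (a : ℕ)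
  rwa [Fin.cast_val_eq_self] at this

/-- if a disjoint union of `t` cycles is `S`-fair, then `S` has at most
`4t` distinct values. -/
theorem stmt_17 (t : ℕ) (n : Fin t → ℕ) (hn : ∀ i, 3 ≤ n i)
    (S : Multiset ℕ) (hSpos : ∀ s ∈ S, 0 < s)
    (hScard : Multiset.card S = ∑ i : Fin t, n i)
    (hfair : IsFair (cyclesUnion t n) S) :
    S.toFinset.card ≤ 4 * t := by
  obtain ⟨f, k, hf1, hk⟩ := hfair
  set T : Fin t → Finset ℕ := fun i =>
    ({f ⟨i, ⟨0, by have := hn i; omega⟩⟩, f ⟨i, ⟨1, by have := hn i; omega⟩⟩,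
      k - f ⟨i, ⟨0, by have := hn i; omega⟩⟩, k - f ⟨i, ⟨1, by have := hn i; omega⟩⟩} : Finset ℕ)
    with hT
  have hS : S.toFinset = Finset.image f Finset.univ := by
    rw [← hf1]; rfl
  have hsub : S.toFinset ⊆ Finset.univ.biUnion T := by
    rw [hS]
    intro x hx
    rw [Finset.mem_image] at hx
    obtain ⟨⟨i, a⟩, -, rfl⟩ := hx
    haveI : NeZero (n i) := ⟨by have := hn i; omega⟩
    rw [Finset.mem_biUnion]
    refine ⟨i, Finset.mem_univ i, ?_⟩
    have e0 : (0 : Fin (n i)) = ⟨0, by have := hn i; omega⟩ := by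
      ext; simp
    have e1 : (1 : Fin (n i)) = ⟨1, by have := hn i; omega⟩ := by
      ext; rw [Fin.val_one']; exact Nat.mod_eq_of_lt (by have := hn i; omega)
    have h := cu_vals f k hk i (hn i) a
    rw [e0, e1] at h
    exact h
  calc S.toFinset.card ≤ _ := Finset.card_le_card hsub
    _ ≤ ∑ i : Fin t, (T i).card := Finset.card_biUnion_le
    _ ≤ ∑ _i : Fin t, 4 := Finset.sum_le_sum (fun i _ => by
        rw [hT]
        apply (Finset.card_insert_le _ _).trans
        apply Nat.succ_le_succ
        apply (Finset.card_insert_le _ _).trans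
        apply Nat.succ_le_succ
        apply (Finset.card_insert_le _ _).trans
        simp)
    _ = 4 * t := by simp [mul_comm]
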